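/- Let B be a finite set of cardinality N, and define type cardinalities by card(ι) = 2^N for base types, and card(σ₁ ⇒ ... ⇒ σ_n ⇒ ι) = card(ι)^(card(σ₁)·...·card(σ_n)). If a simple type σ has order at most K and every arrow-sequence in σ has length at most d (with n+1 ≤ d), then card(σ) ≤ exp₂^{K+1}(d^K · N). -/

import Mathlib

/-- Iterated exponential: `exp2 0 n = n`, `exp2 (K+1) n = 2 ^ exp2 K n`. -/
def exp2 : ℕ → ℕ → ℕ
  | 0, n => n
  | K + 1, n => 2 ^ exp2 K n

/-- Simple types over a countable set of sorts. -/
inductive Ty where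
  | base : ℕ → Ty
  | arrow : Ty → Ty → Ty

/-- Type order: sorts have order 0, `σ ⇒ τ` has order `max (order σ + 1) (order τ)`. -/
def Ty.order : Ty → ℕ
  | .base _ => 0
  | .arrow σ τ => max (σ.order + 1) τ.order

/-- Length of the arrow spine of a type: `σ₁ ⇒ ... ⇒ σ_n ⇒ ι` has spine length `n + 1`. -/
def Ty.spineLen : Ty → ℕ
  | .base _ => 1
  | .arrow _ τ => τ.spineLen + 1

/-- Maximal spine length of any (sub)type occurring in a type. -/
def Ty.maxSpine : Ty → ℕ
  | .base _ => 1
  | .arrow σ τ => max (τ.spineLen + 1) (max σ.maxSpine τ.maxSpine)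

/-- Cardinality of the interpretation of a type, relative to a set `B` of
cardinality `N`: a sort is interpreted as the powerset of (part of) `B`, and an
arrow type as the full function space. -/
def cardT (N : ℕ) : Ty → ℕ
  | .base _ => 2 ^ N
  | .arrow σ τ => cardT N τ ^ cardT N σ

lemma le_exp2 (K n : ℕ) : n ≤ exp2 K n := by
  induction K with
  | zero => simp [exp2]
  | succ K ih =>
    calc n ≤ exp2 K n := ih
    _ ≤ 2 ^ exp2 K n := Nat.le_of_lt Nat.lt_two_pow_self
    _ = exp2 (K+1) n := rfl

lemma exp2_mono (K : ℕ) {n m : ℕ} (h : n ≤ m) : exp2 K n ≤ exp2 K m := by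
  induction K with
  | zero => simpa [exp2]
  | succ K ih => exact Nat.pow_le_pow_right (by norm_num) ih

lemma one_le_exp2_succ (K n : ℕ) : 1 ≤ exp2 (K+1) n :=
  Nat.one_le_two_pow

lemma mul_exp2_le (d : ℕ) {m : ℕ} (hm : 1 ≤ m) :
    ∀ K, d * exp2 K m ≤ exp2 K (d * m) := by
  intro K
  induction K with
  | zero => simp [exp2]
  | succ K ih =>
    show d * 2 ^ exp2 K m ≤ 2 ^ exp2 K (d * m)
    rcases Nat.eq_zero_or_pos d with rfl | hd
    · simp
    have h3 : 1 ≤ exp2 K m := le_trans hm (le_exp2 K m)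
    have h1 : exp2 K m + (d - 1) ≤ exp2 K (d * m) := by
      have h2 : d * exp2 K m ≤ exp2 K (d * m) := ih
      nlinarith [Nat.sub_add_cancel hd]
    have hd2 : d ≤ 2 ^ (d - 1) := by
      have := Nat.lt_two_pow_self (n := d - 1); omega
    calc d * 2 ^ exp2 K m ≤ 2 ^ (d-1) * 2 ^ exp2 K m :=
          Nat.mul_le_mul_right _ hd2
    _ = 2 ^ (exp2 K m + (d-1)) := by rw [pow_add, Nat.mul_comm]
    _ ≤ 2 ^ exp2 K (d * m) := Nat.pow_le_pow_right (by norm_num) h1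

lemma Ty.spineLen_pos (σ : Ty) : 1 ≤ σ.spineLen := by
  cases σ <;> simp [Ty.spineLen]

lemma Ty.one_le_maxSpine (σ : Ty) : 1 ≤ σ.maxSpine := by
  cases σ <;> simp [Ty.maxSpine]

lemma Ty.spineLen_le_maxSpine (σ : Ty) : σ.spineLen ≤ σ.maxSpine := by
  induction σ with
  | base _ => simp [Ty.spineLen, Ty.maxSpine]
  | arrow σ τ ihσ ihτ =>
    simp only [Ty.spineLen, Ty.maxSpine]
    omega

lemma cardT_zero (σ : Ty) : cardT 0 σ = 1 := by
  induction σ with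
  | base _ => simp [cardT]
  | arrow σ τ ihσ ihτ => simp [cardT, ihσ, ihτ]

lemma key (N d : ℕ) (hN : 1 ≤ N) (hd : 1 ≤ d) :
    ∀ K σ, Ty.order σ ≤ K → Ty.maxSpine σ ≤ d →
      cardT N σ ≤ exp2 (K + 1) (d ^ K * N) := by
  intro K
  induction K with
  | zero =>
    intro σ hord hsp
    cases σ with
    | base i => simp [cardT, exp2]
    | arrow σ τ => simp [Ty.order] at hord
  | succ K ih =>
    have inner : ∀ σ : Ty, σ.order ≤ K + 1 → σ.maxSpine ≤ d →
        cardT N σ ≤ 2 ^ (N * (exp2 (K + 1) (d ^ K * N)) ^ (σ.spineLen - 1)) := by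
      intro σ
      induction σ with
      | base i => intro _ _; simp [cardT, Ty.spineLen]
      | arrow σ τ ihσ ihτ =>
        intro hord hsp
        simp only [Ty.order, max_le_iff] at hord
        simp only [Ty.maxSpine, max_le_iff] at hsp
        have hσ : cardT N σ ≤ exp2 (K + 1) (d ^ K * N) :=
          ih σ (by omega) hsp.2.1
        have hτ : cardT N τ ≤ 2 ^ (N * (exp2 (K + 1) (d ^ K * N)) ^ (τ.spineLen - 1)) :=
          ihτ hord.2 hsp.2.2
        set c := exp2 (K + 1) (d ^ K * N) with hc
        calc cardT N (Ty.arrow σ τ) = cardT N τ ^ cardT N σ := rfl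
        _ ≤ (2 ^ (N * c ^ (τ.spineLen - 1))) ^ cardT N σ :=
            Nat.pow_le_pow_left hτ _
        _ ≤ (2 ^ (N * c ^ (τ.spineLen - 1))) ^ c :=
            Nat.pow_le_pow_right Nat.one_le_two_pow hσ
        _ = 2 ^ (N * c ^ (τ.spineLen - 1) * c) := by rw [← pow_mul]
        _ = 2 ^ (N * c ^ ((Ty.arrow σ τ).spineLen - 1)) := by
            have h1 : 1 ≤ τ.spineLen := τ.spineLen_pos
            have : (Ty.arrow σ τ).spineLen - 1 = (τ.spineLen - 1) + 1 := by
              simp [Ty.spineLen]; omega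
            rw [this, pow_succ, mul_assoc]
    intro σ hord hsp
    have hl : σ.spineLen ≤ d := le_trans σ.spineLen_le_maxSpine hsp
    have hl1 : 1 ≤ σ.spineLen := σ.spineLen_pos
    set a := exp2 K (d ^ K * N) with ha
    have hkey := inner σ hord hsp
    have hNa : N ≤ 2 ^ a := by
      calc N ≤ d ^ K * N := Nat.le_mul_of_pos_left _ (Nat.pow_pos (n := K) hd)
      _ ≤ a := le_exp2 _ _
      _ ≤ 2 ^ a := Nat.le_of_lt Nat.lt_two_pow_self
    have harg : N * (exp2 (K + 1) (d ^ K * N)) ^ (σ.spineLen - 1) ≤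
        exp2 (K + 1) (d ^ (K + 1) * N) := by
      have : exp2 (K + 1) (d ^ K * N) = 2 ^ a := rfl
      rw [this, ← pow_mul]
      calc N * 2 ^ (a * (σ.spineLen - 1)) ≤ 2 ^ a * 2 ^ (a * (σ.spineLen - 1)) :=
            Nat.mul_le_mul_right _ hNa
      _ = 2 ^ (a + a * (σ.spineLen - 1)) := by rw [pow_add]
      _ = 2 ^ (a * σ.spineLen) := by
          congr 1
          obtain ⟨l, hl'⟩ : ∃ l, σ.spineLen = l + 1 := ⟨σ.spineLen - 1, by omega⟩
          rw [hl', Nat.add_sub_cancel, Nat.mul_succ, Nat.add_comm]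
      _ ≤ 2 ^ (a * d) := Nat.pow_le_pow_right (by norm_num) (Nat.mul_le_mul_left _ hl)
      _ ≤ 2 ^ (exp2 K (d ^ (K + 1) * N)) := by
          apply Nat.pow_le_pow_right (by norm_num)
          have hm : 1 ≤ d ^ K * N :=
            Nat.one_le_iff_ne_zero.mpr (by positivity)
          calc a * d = d * exp2 K (d ^ K * N) := by rw [Nat.mul_comm]
          _ ≤ exp2 K (d * (d ^ K * N)) := mul_exp2_le d hm K
          _ = exp2 K (d ^ (K + 1) * N) := by ring_nf
      _ = exp2 (K + 1) (d ^ (K + 1) * N) := rfl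
    calc cardT N σ ≤ 2 ^ (N * (exp2 (K + 1) (d ^ K * N)) ^ (σ.spineLen - 1)) := hkey
    _ ≤ 2 ^ exp2 (K + 1) (d ^ (K + 1) * N) := Nat.pow_le_pow_right (by norm_num) harg
    _ = exp2 (K + 2) (d ^ (K + 1) * N) := rfl

theorem cardT_le_exp2 (N K d : ℕ) (σ : Ty)
    (horder : σ.order ≤ K) (hspine : σ.maxSpine ≤ d) :
    cardT N σ ≤ exp2 (K + 1) (d ^ K * N) := by
  rcases Nat.eq_zero_or_pos N with rfl | hN
  · rw [cardT_zero]
    exact one_le_exp2_succ _ _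
  · exact key N d hN (le_trans σ.one_le_maxSpine hspine) K σ horder hspine
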